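/- Let c > 0, δ > 0, and f : [−c, c] → {1,0,−1} satisfy: whenever x₁+x₂+x₃ = 0 with all xᵢ ∈ [−c,c], the multiset {f(x₁),f(x₂),f(x₃)} is consistent. Then there exists X ∈ {1,0,−1} such that for every integer n with 0 < n < c/δ, f(nδ) = X and f(−nδ) = −X. -/

import Mathlib

def Consistent (x y z : ℤ) : Prop :=
  ({x, y, z} : Multiset ℤ) = {1, 1, -1} ∨
  ({x, y, z} : Multiset ℤ) = {1, 0, -1} ∨
  ({x, y, z} : Multiset ℤ) = {1, -1, -1} ∨
  ({x, y, z} : Multiset ℤ) = {0, 0, 0}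

theorem stmt3 (c δ : ℝ) (hc : 0 < c) (hδ : 0 < δ)
    (f : ℝ → ℤ)
    (hrange : ∀ x ∈ Set.Icc (-c) c, f x = 1 ∨ f x = 0 ∨ f x = -1)
    (hcons : ∀ x₁ ∈ Set.Icc (-c) c, ∀ x₂ ∈ Set.Icc (-c) c, ∀ x₃ ∈ Set.Icc (-c) c,
      x₁ + x₂ + x₃ = 0 → Consistent (f x₁) (f x₂) (f x₃)) :
    ∃ X : ℤ, (X = 1 ∨ X = 0 ∨ X = -1) ∧
      ∀ n : ℤ, 0 < n → (n : ℝ) < c / δ →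
        f ((n : ℝ) * δ) = X ∧ f (-((n : ℝ) * δ)) = -X := by
  by_cases hdc : δ < c
  case neg =>
    refine ⟨0, Or.inr (Or.inl rfl), ?_⟩
    intro n hn hn'
    exfalso
    push_neg at hdc
    have h1 : (1:ℝ) ≤ (n:ℝ) := by exact_mod_cast hn
    have h2 : c / δ ≤ 1 := by rw [div_le_one hδ]; exact hdc
    linarith
  case pos =>
    have h0mem : (0:ℝ) ∈ Set.Icc (-c) c := by constructor <;> linarith
    have hδmem : δ ∈ Set.Icc (-c) c := by constructor <;> linarith
    have hf0 : f 0 = 0 := by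
      have h := hcons 0 h0mem 0 h0mem 0 h0mem (by ring)
      rcases hrange 0 h0mem with h1|h1|h1 <;> rw [h1] at h ⊢ <;>
        first
        | rfl
        | (unfold Consistent at h; revert h; decide)
    have hneg : ∀ x ∈ Set.Icc (-c) c, f (-x) = - f x := by
      intro x hx
      have hx' : -x ∈ Set.Icc (-c) c := by
        simp only [Set.mem_Icc] at hx ⊢
        constructor <;> linarith [hx.1, hx.2]
      have h := hcons x hx (-x) hx' 0 h0mem (by ring)
      rw [hf0] at h
      rcases hrange x hx with h1|h1|h1 <;> rcases hrange (-x) hx' with h2|h2|h2 <;>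
        rw [h1, h2] at h ⊢ <;>
        first
        | rfl
        | (unfold Consistent at h; revert h; decide)
    set X := f δ with hX
    have hXr : X = 1 ∨ X = 0 ∨ X = -1 := hrange δ hδmem
    have key : ∀ n : ℕ, 0 < n → (n : ℝ) < c / δ → f ((n : ℝ) * δ) = X := by
      intro n
      induction n with
      | zero => intro h; exact absurd h (by omega)
      | succ m ih =>
        intro _ hlt
        rcases Nat.eq_zero_or_pos m with hm | hm
        · subst hm; norm_num; rfl
        · have hm1 : (1:ℝ) ≤ (m:ℝ) := by exact_mod_cast hm
          have hcast : ((m+1 : ℕ) : ℝ) = (m:ℝ) + 1 := by push_cast; ring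
          have hmlt : (m : ℝ) < c / δ := by rw [hcast] at hlt; linarith
          have hfm := ih hm hmlt
          have hsc : ((m:ℝ) + 1) * δ < c := by
            have := (lt_div_iff₀ hδ).mp hlt
            rw [hcast] at this; linarith
          have hmδ : (m:ℝ) * δ ∈ Set.Icc (-c) c := by
            constructor <;> nlinarith
          have hsδ : ((m+1:ℕ):ℝ) * δ ∈ Set.Icc (-c) c := by
            rw [hcast]; constructor <;> nlinarith
          have hsδ' : -(((m+1:ℕ):ℝ) * δ) ∈ Set.Icc (-c) c := by
            rw [hcast]; constructor <;> nlinarith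
          have h := hcons ((m:ℝ) * δ) hmδ δ hδmem (-(((m+1:ℕ):ℝ) * δ)) hsδ'
            (by push_cast; ring)
          rw [hfm, hneg _ hsδ, ← hX] at h
          rcases hXr with h1|h1|h1 <;> rcases hrange _ hsδ with h2|h2|h2 <;>
            rw [h1, h2] at h ⊢ <;>
            first
            | rfl
            | (unfold Consistent at h; revert h; decide)
    refine ⟨X, hXr, ?_⟩
    intro n hn hn'
    have hn0 : (n.toNat : ℝ) = (n : ℝ) := by
      exact_mod_cast congrArg Int.cast (Int.toNat_of_nonneg hn.le)
    have hnt : 0 < n.toNat := by omega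
    have hfx : f ((n:ℝ) * δ) = X := by
      rw [← hn0]; exact key n.toNat hnt (by rw [hn0]; exact hn')
    refine ⟨hfx, ?_⟩
    have hmem : (n:ℝ) * δ ∈ Set.Icc (-c) c := by
      have h1 : (1:ℝ) ≤ (n:ℝ) := by exact_mod_cast hn
      have := (lt_div_iff₀ hδ).mp hn'
      constructor <;> nlinarith
    rw [hneg _ hmem, hfx]
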